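/- For every z ≥ 1, the identity 2·∑_{i=1}^z [C(z,i) · ∑_{j=0}^i C(z,j)] = 2^(2z) + ∑_{i=1}^{z−1} C(z,i)² holds. -/

import Mathlib

open Finset

/-- Binomial identity used for the Act-win threshold function with m = k = z. -/
theorem actWin_binomial_identity (z : ℕ) (hz : 1 ≤ z) :
    2 * ∑ i ∈ Finset.Icc 1 z, z.choose i * ∑ j ∈ Finset.range (i + 1), z.choose j
      = 2 ^ (2 * z) + ∑ i ∈ Finset.Ico 1 z, (z.choose i) ^ 2 := by
  set f := z.choose with hf
  set A := ∑ i ∈ range (z + 1), f i * ∑ j ∈ range i, f j with hA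
  set E := ∑ i ∈ Finset.Ico 1 z, (f i) ^ 2 with hE
  have hIcc : Finset.Icc 1 z = Finset.Ico 1 (z + 1) := by
    rw [Finset.Ico_add_one_right_eq_Icc]
  have hDiag : ∑ i ∈ range (z + 1), f i ^ 2 = E + 2 := by
    rw [range_eq_Ico, Finset.sum_eq_sum_Ico_succ_bot (by omega : 0 < z + 1),
      Finset.sum_Ico_succ_top (by omega : 1 ≤ z)]
    simp [hf, Nat.choose_self]
    ring
  -- LHS inner sum equals A + (E + 1)
  have hS : ∑ i ∈ Finset.Icc 1 z, f i * ∑ j ∈ range (i + 1), f j = A + (E + 1) := by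
    have h1 : ∀ i ∈ Finset.Icc 1 z, f i * ∑ j ∈ range (i + 1), f j
        = f i * ∑ j ∈ range i, f j + f i ^ 2 := by
      intro i _
      rw [Finset.sum_range_succ, Nat.mul_add, sq]
    rw [Finset.sum_congr rfl h1, Finset.sum_add_distrib]
    have h2 : ∑ i ∈ Finset.Icc 1 z, f i * ∑ j ∈ range i, f j = A := by
      rw [hA, hIcc, range_eq_Ico, Finset.sum_eq_sum_Ico_succ_bot (by omega : 0 < z + 1)]
      simp
    have h3 : ∑ i ∈ Finset.Icc 1 z, f i ^ 2 = E + 1 := by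
      rw [hIcc, Finset.sum_Ico_succ_top (by omega : 1 ≤ z)]
      simp [hf, Nat.choose_self]
      rfl
    rw [h2, h3]
  -- square of row sum
  have hsq : 2 ^ (2 * z) = 2 * A + (E + 2) := by
    have hrow : ∑ i ∈ range (z + 1), f i = 2 ^ z := Nat.sum_range_choose z
    have hsq1 : 2 ^ (2 * z) = (∑ i ∈ range (z + 1), f i) * (∑ j ∈ range (z + 1), f j) := by
      rw [hrow, ← pow_add, two_mul]
    rw [hsq1, Finset.sum_mul_sum]
    have hsplit : ∀ i ∈ range (z + 1),
        ∑ j ∈ range (z + 1), f i * f j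
          = f i * ∑ j ∈ range i, f j + f i ^ 2 + ∑ j ∈ Finset.Ico (i + 1) (z + 1), f i * f j := by
      intro i hi
      rw [Finset.mem_range] at hi
      rw [range_eq_Ico, ← Finset.sum_Ico_consecutive _ (by omega : 0 ≤ i) (by omega : i ≤ z + 1),
        Finset.sum_eq_sum_Ico_succ_bot (by omega : i < z + 1), ← range_eq_Ico, Finset.mul_sum, sq]
      ring
    rw [Finset.sum_congr rfl hsplit, Finset.sum_add_distrib, Finset.sum_add_distrib, hDiag]
    have hupper : ∑ i ∈ range (z + 1), ∑ j ∈ Finset.Ico (i + 1) (z + 1), f i * f j = A := by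
      rw [range_eq_Ico, Finset.sum_Ico_Ico_comm']
      simp only [← range_eq_Ico]
      rw [hA]
      refine Finset.sum_congr rfl fun j _ => ?_
      rw [Finset.mul_sum]
      exact Finset.sum_congr rfl fun i _ => Nat.mul_comm _ _
    rw [hupper]
    ring
  rw [hS, hsq]
  ring
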